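/- For every square matrix x with coefficients in a field k of characteristic zero, the transpose of x is conjugate to x; that is, there exists an invertible matrix g over k such that xᵗ = g x g⁻¹. -/

import Mathlib

open Polynomial

namespace TransposeConjAux

variable {k : Type} [Field k]

section Cyclic

variable (a : k[X])

/-- Monic normalization of a polynomial. -/
noncomputable def mnorm : k[X] := a * C (leadingCoeff a)⁻¹

lemma mnorm_monic (ha : a ≠ 0) : (mnorm a).Monic := monic_mul_leadingCoeff_inv ha

lemma mnorm_dvd : mnorm a ∣ a := by
  by_cases ha : a = 0
  · simp [ha, mnorm]
  · exact ⟨C (leadingCoeff a), by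
      rw [mnorm, mul_assoc, ← C_mul, inv_mul_cancel₀ (leadingCoeff_ne_zero.mpr ha), C_1, mul_one]⟩

lemma dvd_mnorm (ha : a ≠ 0) : a ∣ mnorm a := ⟨C (leadingCoeff a)⁻¹, rfl⟩

/-- The "top coefficient of the remainder" functional on `k[X] ⧸ (a)`. -/
noncomputable def lam : (k[X] ⧸ (k[X] ∙ a)) →ₗ[k] k :=
  (Submodule.liftQ ((k[X] ∙ a).restrictScalars k)
      ((lcoeff k ((mnorm a).natDegree - 1)) ∘ₗ (modByMonicHom (mnorm a)))
      (by
        intro s hs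
        simp only [Submodule.restrictScalars_mem, Submodule.mem_span_singleton] at hs
        obtain ⟨c, rfl⟩ := hs
        have h0 : (c • a) %ₘ mnorm a = 0 := by
          by_cases ha : a = 0
          · simp [ha]
          · exact (modByMonic_eq_zero_iff_dvd (mnorm_monic a ha)).mpr
              (Dvd.dvd.mul_left (mnorm_dvd a) c)
        simp [LinearMap.mem_ker, modByMonicHom, smul_eq_mul] at h0 ⊢
        simp [h0])).comp
    (Submodule.Quotient.restrictScalarsEquiv k ((k[X] ∙ a))).symm.toLinearMap

lemma lam_mk (s : k[X]) :
    lam a (Submodule.Quotient.mk s) = (s %ₘ mnorm a).coeff ((mnorm a).natDegree - 1) := rfl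


lemma mk_mul_mk (s t : k[X]) :
    (Submodule.Quotient.mk s : k[X] ⧸ (k[X] ∙ a)) * Submodule.Quotient.mk t
      = Submodule.Quotient.mk (s * t) := by
  show (Ideal.Quotient.mk _ s) * (Ideal.Quotient.mk _ t) = Ideal.Quotient.mk _ (s * t)
  rw [map_mul]

lemma smul_mk (f : k[X]) (s : k[X]) :
    f • (Submodule.Quotient.mk s : k[X] ⧸ (k[X] ∙ a)) = Submodule.Quotient.mk (f * s) := by
  rw [← Submodule.Quotient.mk_smul, smul_eq_mul]

lemma ksmul_mk (c : k) (s : k[X]) :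
    c • (Submodule.Quotient.mk s : k[X] ⧸ (k[X] ∙ a)) = Submodule.Quotient.mk (c • s) :=
  (Submodule.Quotient.mk_smul _ _ _).symm

lemma smul_mul_q (c : k) (α β : k[X] ⧸ (k[X] ∙ a)) : (c • α) * β = c • (α * β) := by
  obtain ⟨s, rfl⟩ := Submodule.Quotient.mk_surjective _ α
  obtain ⟨t, rfl⟩ := Submodule.Quotient.mk_surjective _ β
  rw [ksmul_mk, mk_mul_mk, mk_mul_mk, ksmul_mk, smul_mul_assoc]

lemma mul_comm_q (α β : k[X] ⧸ (k[X] ∙ a)) : α * β = β * α := mul_comm α β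

lemma psmul_mul_q (f : k[X]) (α β : k[X] ⧸ (k[X] ∙ a)) : (f • α) * β = α * (f • β) := by
  obtain ⟨s, rfl⟩ := Submodule.Quotient.mk_surjective _ α
  obtain ⟨t, rfl⟩ := Submodule.Quotient.mk_surjective _ β
  rw [smul_mk, smul_mk, mk_mul_mk, mk_mul_mk]
  congr 1
  ring


lemma Csmul_q (c : k) (α : k[X] ⧸ (k[X] ∙ a)) : (C c : k[X]) • α = c • α := by
  obtain ⟨s, rfl⟩ := Submodule.Quotient.mk_surjective _ α
  rw [smul_mk, ksmul_mk, smul_eq_C_mul]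

lemma lam_nondeg (ha : a ≠ 0) (α : k[X] ⧸ (k[X] ∙ a)) (hα : α ≠ 0) :
    ∃ β, lam a (α * β) ≠ 0 := by
  obtain ⟨s, rfl⟩ := Submodule.Quotient.mk_surjective _ α
  set q := mnorm a with hqdef
  have hq : q.Monic := mnorm_monic a ha
  have hnd : ¬ q ∣ s := by
    intro hdvd
    apply hα
    rw [Submodule.Quotient.mk_eq_zero, Submodule.mem_span_singleton]
    obtain ⟨c, rfl⟩ := (dvd_mnorm a ha).trans hdvd
    exact ⟨c, by rw [smul_eq_mul, mul_comm]⟩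
  set r := s %ₘ q with hrdef
  have hr0 : r ≠ 0 := fun h => hnd ((modByMonic_eq_zero_iff_dvd hq).mp h)
  have hrd : r.natDegree < q.natDegree :=
    natDegree_lt_natDegree hr0 (degree_modByMonic_lt s hq)
  set m := q.natDegree - 1 - r.natDegree with hmdef
  refine ⟨Submodule.Quotient.mk (X ^ m), ?_⟩
  rw [mk_mul_mk, lam_mk]
  have hsplit : s * X ^ m = q * (s /ₘ q * X ^ m) + r * X ^ m := by
    conv_lhs => rw [← modByMonic_add_div s q]
    ring
  have hdeg : (r * X ^ m).degree < q.degree := by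
    have h1 : (r * X ^ m).natDegree = r.natDegree + m := by
      rw [natDegree_mul hr0 (pow_ne_zero m X_ne_zero), natDegree_X_pow]
    have h2 : r.natDegree + m = q.natDegree - 1 := by omega
    have h3 : (r * X ^ m).natDegree < q.natDegree := by omega
    rwa [degree_eq_natDegree (mul_ne_zero hr0 (pow_ne_zero m X_ne_zero)),
      degree_eq_natDegree hq.ne_zero, Nat.cast_lt]
  have hmod : (s * X ^ m) %ₘ q = r * X ^ m := by
    rw [hsplit, add_modByMonic, self_mul_modByMonic hq,
      (modByMonic_eq_self_iff hq).mpr hdeg, zero_add]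
  rw [← hqdef, hmod, coeff_mul_X_pow']
  have hle : m ≤ q.natDegree - 1 := by omega
  rw [if_pos hle]
  have : q.natDegree - 1 - m = r.natDegree := by omega
  rw [this, ← leadingCoeff]
  exact leadingCoeff_ne_zero.mpr hr0

end Cyclic

end TransposeConjAux

set_option maxHeartbeats 2000000 in
open TransposeConjAux Polynomial DirectSum in
/-- For every square matrix `x` over a field `k` of characteristic zero, the transpose of
`x` is conjugate to `x`: there is an invertible matrix `g` with `xᵗ = g * x * g⁻¹`. -/
theorem transpose_conjugate {k : Type} [Field k] [CharZero k] {n : ℕ}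
    (x : Matrix (Fin n) (Fin n) k) :
    ∃ g : Matrix (Fin n) (Fin n) k, IsUnit g ∧ x.transpose = g * x * g⁻¹ := by
  classical
  set φ := Matrix.toLin' x with hφ
  set V := Module.AEval' φ with hV
  set o := Module.AEval'.of φ with ho
  have hTors : Module.IsTorsion k[X] V := by
    intro v
    refine ⟨⟨x.charpoly, mem_nonZeroDivisors_of_ne_zero x.charpoly_monic.ne_zero⟩, ?_⟩
    show x.charpoly • v = 0
    have h2 : Polynomial.aeval φ x.charpoly = 0 := by
      have h3 := Polynomial.aeval_algHom_apply
        (Matrix.toLinAlgEquiv' (R := k) (n := Fin n)).toAlgHom x x.charpoly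
      rw [Matrix.aeval_self_charpoly, map_zero] at h3
      rw [hφ]
      exact h3
    have h1 : o.symm (x.charpoly • v) = Polynomial.aeval φ x.charpoly • o.symm v :=
      Module.AEval.of_symm_smul _ _ _
    rw [h2, zero_smul] at h1
    have := congrArg o h1
    rwa [o.apply_symm_apply, map_zero] at this
  obtain ⟨ι, hι, p, hirr, e, ⟨Φ⟩⟩ := Module.equiv_directSum_of_isTorsion hTors
  have ha : ∀ i, p i ^ e i ≠ 0 := fun i => pow_ne_zero _ (hirr i).ne_zero
  have hXsmul : ∀ u : Fin n → k, (X : k[X]) • (o u) = o (x.mulVec u) := by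
    intro u
    rw [Module.AEval'.X_smul_of]
    exact congrArg o (Matrix.toLin'_apply x u)
  have hCN : ∀ (c : k) (w : ⨁ i, k[X] ⧸ (k[X] ∙ p i ^ e i)), (C c : k[X]) • w = c • w := by
    intro c w
    refine DFinsupp.ext fun i => ?_
    rw [DirectSum.smul_apply, DirectSum.smul_apply, Csmul_q]
  have hΦk : ∀ (c : k) (v : V), Φ (c • v) = c • Φ v := by
    intro c v
    rw [← Module.AEval.C_smul, map_smul, hCN]
  let βm : (Fin n → k) →ₗ[k] (Fin n → k) →ₗ[k] k :=
    LinearMap.mk₂ k (fun u w => ∑ i, lam (p i ^ e i) ((Φ (o u)) i * (Φ (o w)) i))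
      (fun u u' w => by
        simp only [map_add, DirectSum.add_apply, add_mul, Finset.sum_add_distrib])
      (fun c u w => by
        simp only [map_smul, hΦk, DirectSum.smul_apply, smul_mul_q, map_smul, smul_eq_mul,
          Finset.mul_sum])
      (fun u w w' => by
        simp only [map_add, DirectSum.add_apply, mul_add, Finset.sum_add_distrib])
      (fun c u w => by
        simp only [map_smul, hΦk, DirectSum.smul_apply]
        simp only [mul_comm_q _ _ (c • _), smul_mul_q, map_smul, smul_eq_mul, Finset.mul_sum]
        exact Finset.sum_congr rfl fun i _ => by rw [mul_comm_q])
  have hβm_apply : ∀ u w, βm u w = ∑ i, lam (p i ^ e i) ((Φ (o u)) i * (Φ (o w)) i) :=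
    fun u w => rfl
  have hswap : ∀ u w, βm (x.mulVec u) w = βm u (x.mulVec w) := by
    intro u w
    rw [hβm_apply, hβm_apply, ← hXsmul u, ← hXsmul w, map_smul, map_smul]
    exact Finset.sum_congr rfl fun i _ => by
      rw [DirectSum.smul_apply, DirectSum.smul_apply, psmul_mul_q]
  set S := LinearMap.toMatrix₂' k βm with hS
  have hβS : ∀ u w, βm u w = dotProduct u (S.mulVec w) := by
    intro u w
    rw [← Matrix.toLinearMap₂'_apply' (T := k), hS, Matrix.toLinearMap₂'_toMatrix']
  have hmat : x.transpose * S = S * x := by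
    have h1 : βm.comp (Matrix.toLin' x) = βm.compl₂ (Matrix.toLin' x) := by
      refine LinearMap.ext fun u => LinearMap.ext fun w => ?_
      simp only [LinearMap.comp_apply, LinearMap.compl₂_apply, Matrix.toLin'_apply]
      exact hswap u w
    have h2 := congrArg (LinearMap.toMatrix₂' k) h1
    rwa [LinearMap.toMatrix₂'_comp, LinearMap.toMatrix₂'_compl₂, LinearMap.toMatrix'_toLin',
      ← hS] at h2
  have hnondeg : ∀ w : Fin n → k, w ≠ 0 → ∃ u, βm u w ≠ 0 := by
    intro w hw
    have h1 : Φ (o w) ≠ 0 := by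
      intro h
      apply hw
      have h2 : o w = 0 := Φ.injective (by rw [h, map_zero])
      have := congrArg o.symm h2
      rwa [o.symm_apply_apply, map_zero] at this
    have h3 : ∃ i, (Φ (o w)) i ≠ 0 := by
      by_contra hc
      push_neg at hc
      exact h1 (DFinsupp.ext hc)
    obtain ⟨i, hi⟩ := h3
    obtain ⟨β, hβ⟩ := lam_nondeg (p i ^ e i) (ha i) _ hi
    refine ⟨o.symm (Φ.symm (DirectSum.of (fun j => k[X] ⧸ (k[X] ∙ p j ^ e j)) i β)), ?_⟩
    rw [hβm_apply, o.apply_symm_apply, Φ.apply_symm_apply]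
    rw [Finset.sum_eq_single i]
    · rw [DirectSum.of_eq_same, mul_comm_q]
      exact hβ
    · intro j _ hj
      rw [DirectSum.of_eq_of_ne _ _ _ hj, zero_mul, map_zero]
    · intro h
      exact absurd (Finset.mem_univ i) h
  have hinj : Function.Injective S.mulVec := by
    intro w1 w2 hww
    by_contra hne
    have hw : w1 - w2 ≠ 0 := sub_ne_zero_of_ne hne
    obtain ⟨u, hu⟩ := hnondeg _ hw
    apply hu
    rw [hβS, Matrix.mulVec_sub, hww, sub_self, dotProduct_zero]
  have hU : IsUnit S := Matrix.mulVec_injective_iff_isUnit.mp hinj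
  refine ⟨S, hU, ?_⟩
  have hdet : IsUnit S.det := (Matrix.isUnit_iff_isUnit_det S).mp hU
  rw [← hmat, Matrix.mul_assoc, Matrix.mul_nonsing_inv S hdet, Matrix.mul_one]
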